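/- Let F_i ∈ ℚ[Y] be defined by F_0(Y) = Y − 1 and F_{i+1}(Y) = (Y² − Y) · Y · F_i′(Y). Then for every i ≥ 1, the coefficient f(2,i) of Y^{2i} in F_i equals −(2i+1)!!/3, where (2i+1)!! = 1·3·5⋯(2i+1). -/

import Mathlib

open Nat

/-- The polynomials `F_0(Y) = Y − 1`, `F_{i+1}(Y) = (Y² − Y)·Y·F_i′(Y)`. -/
noncomputable def F : ℕ → Polynomial ℚ
  | 0 => Polynomial.X - 1
  | i + 1 =>
      (Polynomial.X ^ 2 - Polynomial.X) * (Polynomial.X * Polynomial.derivative (F i))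

open Polynomial in
lemma F_succ (i : ℕ) :
    F (i + 1) = X ^ 3 * derivative (F i) - X ^ 2 * derivative (F i) := by
  show (X ^ 2 - X) * (X * derivative (F i)) = _
  ring

lemma F_natDegree_le (i : ℕ) : (F i).natDegree ≤ 2 * i + 1 := by
  induction i with
  | zero =>
    simpa [F] using Polynomial.natDegree_sub_le (Polynomial.X : Polynomial ℚ) 1
  | succ n ih =>
    rw [F_succ]
    refine le_trans (Polynomial.natDegree_sub_le _ _) ?_
    have hd : (Polynomial.derivative (F n)).natDegree ≤ 2 * n :=
      le_trans (Polynomial.natDegree_derivative_le _) (by omega)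
    have h1 := Polynomial.natDegree_mul_le (p := (Polynomial.X : Polynomial ℚ) ^ 3)
      (q := Polynomial.derivative (F n))
    have h2 := Polynomial.natDegree_mul_le (p := (Polynomial.X : Polynomial ℚ) ^ 2)
      (q := Polynomial.derivative (F n))
    simp [Polynomial.natDegree_X_pow] at h1 h2
    omega

lemma F_coeff_zero {i n : ℕ} (h : 2 * i + 1 < n) : (F i).coeff n = 0 :=
  Polynomial.coeff_eq_zero_of_natDegree_lt (lt_of_le_of_lt (F_natDegree_le i) h)

lemma df_step (i : ℕ) : ((2 * (i + 1) - 1)‼ : ℕ) = (2 * i + 1) * (2 * i - 1)‼ := by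
  cases i with
  | zero => rfl
  | succ n =>
    have h1 : 2 * (n + 1 + 1) - 1 = (2 * n + 1) + 2 := by omega
    have h2 : 2 * (n + 1) - 1 = 2 * n + 1 := by omega
    rw [h1, h2, Nat.doubleFactorial]
    congr 1

lemma F_lead (i : ℕ) : (F i).coeff (2 * i + 1) = ((2 * i - 1)‼ : ℚ) := by
  induction i with
  | zero => simp [F, Polynomial.coeff_one]
  | succ n ih =>
    rw [F_succ, Polynomial.coeff_sub]
    have e1 : 2 * (n + 1) + 1 = 2 * n + 3 := by omega
    have e2 : 2 * n + 3 = (2 * n) + 3 := by omega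
    have e3 : 2 * n + 3 = (2 * n + 1) + 2 := by omega
    rw [e1]
    rw [show (2 * n + 3) = (2 * n) + 3 from rfl] at *
    rw [Polynomial.coeff_X_pow_mul]
    rw [show (2 * n + 3) = (2 * n + 1) + 2 by omega, Polynomial.coeff_X_pow_mul]
    rw [Polynomial.coeff_derivative, Polynomial.coeff_derivative]
    rw [ih, F_coeff_zero (by omega), df_step]
    push_cast
    ring

theorem f_two_eq (i : ℕ) (hi : 1 ≤ i) :
    (F i).coeff (2 * i) = -(((2 * i + 1)‼ : ℚ) / 3) := by
  induction i with
  | zero => omega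
  | succ n ih =>
    rcases Nat.eq_or_lt_of_le hi with h1 | h1
    · -- n + 1 = 1
      have hn : n = 0 := by omega
      subst hn
      rw [F_succ]
      simp [F, Polynomial.coeff_X_pow, Nat.doubleFactorial]
    · have hn : 1 ≤ n := by omega
      have ihn := ih hn
      have hdf2 : ((2 * n + 1)‼ : ℕ) = (2 * n + 1) * (2 * n - 1)‼ := by
        have h := df_step n
        rwa [show 2 * (n + 1) - 1 = 2 * n + 1 by omega] at h
      rw [F_succ, Polynomial.coeff_sub]
      rw [show 2 * (n + 1) + 1 = (2 * n + 1) + 2 by omega, Nat.doubleFactorial]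
      rw [show (2 * (n + 1)) = (2 * n - 1) + 3 by omega, Polynomial.coeff_X_pow_mul]
      rw [show ((2 * n - 1) + 3) = (2 * n) + 2 by omega, Polynomial.coeff_X_pow_mul]
      rw [Polynomial.coeff_derivative, Polynomial.coeff_derivative]
      rw [show (2 * n - 1) + 1 = 2 * n by omega]
      rw [ihn, F_lead, hdf2]
      push_cast [Nat.cast_sub (by omega : 1 ≤ 2 * n)]
      ring
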